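/- arXiv:1904.09395 — 2 statements merged into one kernel-verified Lean document; each statement's English description precedes it below -/
import Mathlib

section
/- For every integer n ≥ 1, (2/π) · (Γ(2 + n/2))^{2/n} < n/8.5 + 2, where Γ denotes the real Gamma function. -/
open Real

lemma log_ge_one_sub_inv {x : ℝ} (hx : 0 < x) : 1 - 1/x ≤ Real.log x := by
  have h := Real.log_le_sub_one_of_pos (show (0:ℝ) < 1/x by positivity)
  rw [Real.log_div one_ne_zero (ne_of_gt hx), Real.log_one] at h
  linarith

lemma pade {u : ℝ} (hu : 1 ≤ u) : 2 * (u - 1) ≤ (u + 1) * Real.log u := by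
  set f : ℝ → ℝ := fun v => (v + 1) * Real.log v - 2 * (v - 1) with hf
  have hmono : MonotoneOn f (Set.Ici 1) := by
    have hderiv : ∀ v ∈ interior (Set.Ici (1:ℝ)), 0 ≤ deriv f v := by
      intro v hv
      rw [interior_Ici] at hv
      have hv1 : (1:ℝ) < v := hv
      have hv0 : (0:ℝ) < v := by linarith
      have hd : HasDerivAt f (Real.log v + (v+1)/v - 2) v := by
        have h1 : HasDerivAt (fun v : ℝ => (v + 1) * Real.log v)
            (1 * Real.log v + (v+1) * v⁻¹) v :=
          ((hasDerivAt_id v).add_const 1).mul (Real.hasDerivAt_log (ne_of_gt hv0))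
        have h2 : HasDerivAt (fun v : ℝ => 2 * (v - 1)) 2 v := by
          simpa using ((hasDerivAt_id v).sub_const 1).const_mul 2
        rw [show Real.log v + (v+1)/v - 2 = 1 * Real.log v + (v+1) * v⁻¹ - 2 by ring]
        exact h1.sub h2
      rw [hd.deriv]
      have := log_ge_one_sub_inv hv0
      have : (v+1)/v = 1 + 1/v := by field_simp
      rw [this]
      have := log_ge_one_sub_inv hv0
      linarith
    apply monotoneOn_of_deriv_nonneg (convex_Ici 1) _ _ hderiv
    · apply ContinuousOn.sub
      · exact (continuousOn_id.add continuousOn_const).mul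
          (Real.continuousOn_log.mono (by intro x hx; simp at hx ⊢; linarith))
      · fun_prop
    · intro v hv
      rw [interior_Ici] at hv
      have hv0 : (0:ℝ) < v := by simp at hv; linarith
      apply DifferentiableAt.differentiableWithinAt
      apply DifferentiableAt.sub
      · exact (differentiableAt_id.add_const 1).mul (Real.differentiableAt_log (ne_of_gt hv0))
      · fun_prop
  have := hmono (Set.self_mem_Ici) (show u ∈ Set.Ici (1:ℝ) from hu) hu
  simp [hf] at this
  linarith [this]

lemma piece_gen (x a La b c2 : ℝ) (hx : 1 ≤ x) (ha : 0 < a) (hLa : Real.log a ≤ La)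
    (hb : 0 < b) (hc2 : c2 ≤ Real.log b)
    (hu : b * (x + 1) ≤ (85397323/85000000 : ℝ) * (x + 17/2))
    (key : (3/2 * (La + (x + 3/2 - a)/a) - x * c2) *
        ((85397323/85000000 : ℝ) * (x + 17/2) + b * (x + 1))
        < x * (2 * ((85397323/85000000 : ℝ) * (x + 17/2) - b * (x + 1)))) :
    3/2 * Real.log (x + 3/2) < x * Real.log ((85397323/85000000 : ℝ) * (x + 17/2) / (x + 1)) := by
  set s : ℝ := (85397323/85000000 : ℝ) with hs
  have hx0 : (0:ℝ) < x := by linarith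
  have hx1 : (0:ℝ) < x + 1 := by linarith
  have hsx : (0:ℝ) < s * (x + 17/2) := by positivity
  set t : ℝ := s * (x + 17/2) / (x + 1) with ht
  have htpos : 0 < t := by positivity
  have hup : Real.log (x + 3/2) ≤ La + (x + 3/2 - a)/a := by
    have h1 : Real.log ((x + 3/2)/a) ≤ (x + 3/2)/a - 1 :=
      Real.log_le_sub_one_of_pos (by positivity)
    rw [Real.log_div (by linarith) (ne_of_gt ha)] at h1
    have h2 : (x + 3/2 - a)/a = (x + 3/2)/a - 1 := by field_simp
    rw [h2]; linarith
  have hbx : (0:ℝ) < b * (x+1) := by positivity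
  have hu1 : 1 ≤ t / b := by
    rw [le_div_iff₀ hb, ht, div_mul_eq_mul_div, le_div_iff₀ hx1]
    linarith
  have hlogt : Real.log t = Real.log b + Real.log (t / b) := by
    rw [Real.log_div (ne_of_gt htpos) (ne_of_gt hb)]; ring
  set N : ℝ := s * (x + 17/2) - b * (x + 1) with hN
  set D : ℝ := s * (x + 17/2) + b * (x + 1) with hD
  have hDpos : 0 < D := by rw [hD]; positivity
  have hub : t / b - 1 = N / (b * (x+1)) := by rw [ht, hN]; field_simp
  have hub2 : t / b + 1 = D / (b * (x+1)) := by rw [ht, hD]; field_simp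
  have hlow : 2 * N / D ≤ Real.log (t/b) := by
    rw [div_le_iff₀ hDpos]
    have h := pade hu1
    rw [hub, hub2] at h
    have h2 := mul_le_mul_of_nonneg_right h (le_of_lt hbx)
    have e1 : 2 * (N / (b*(x+1))) * (b*(x+1)) = 2*N := by field_simp
    have e2 : (D / (b*(x+1)) * Real.log (t/b)) * (b*(x+1)) = Real.log (t/b) * D := by
      field_simp
    rw [e1, e2] at h2; linarith
  have hkey2 : 3/2 * (La + (x + 3/2 - a)/a) < x * c2 + x * (2 * N / D) := by
    have h3 : 3/2 * (La + (x + 3/2 - a)/a) - x * c2 < x * (2 * N) / D := by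
      rw [lt_div_iff₀ hDpos]; exact key
    have h4 : x * (2 * N) / D = x * (2 * N / D) := by ring
    linarith [h3, h4.symm.le, h4.le]
  have hfin : x * c2 + x * (2 * N / D) ≤ x * Real.log t := by
    have : c2 + 2 * N / D ≤ Real.log t := by rw [hlogt]; linarith
    nlinarith [this, hx0]
  calc 3/2 * Real.log (x + 3/2) ≤ 3/2 * (La + (x + 3/2 - a)/a) := by linarith
    _ < x * c2 + x * (2 * N / D) := hkey2
    _ ≤ x * Real.log t := hfin

set_option maxHeartbeats 1000000 in
lemma master (x : ℝ) (hx : 1 ≤ x) :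
    3/2 * Real.log (x + 3/2) < x * Real.log ((85397323/85000000 : ℝ) * (x + 17/2) / (x + 1)) := by
  have l3up : Real.log 3 ≤ (11022207712/10000000000 : ℝ) := by
    have h98 : Real.log (9/8) ≤ 1/8 := by
      have h := Real.log_le_sub_one_of_pos (show (0:ℝ) < 9/8 by norm_num); linarith
    have h9a : Real.log 9 = Real.log (9/8) + 3 * Real.log 2 := by
      rw [show (9:ℝ) = (9/8) * 2^3 by norm_num,
        Real.log_mul (by norm_num) (by norm_num), Real.log_pow]; push_cast; ring
    have h9b : Real.log 9 = 2 * Real.log 3 := by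
      rw [show (9:ℝ) = 3^2 by norm_num, Real.log_pow]; push_cast; ring
    nlinarith [Real.log_two_lt_d9]
  rcases le_or_gt x (3/2 : ℝ) with h0 | h0
  · exact piece_gen x (2 : ℝ) (108304247/156250000 : ℝ) (4 : ℝ) (13862943606/10000000000 : ℝ) hx (by norm_num)
      (by rw [show (2:ℝ) = 2^1 by norm_num, Real.log_pow]; push_cast; nlinarith [Real.log_two_lt_d9])
      (by norm_num) (by rw [show (4:ℝ) = 2^2 by norm_num, Real.log_pow]; push_cast; nlinarith [Real.log_two_gt_d9])
      (by linarith)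
      (by nlinarith [mul_nonneg (sub_nonneg.2 (show (1 : ℝ) ≤ x by linarith)) (sub_nonneg.2 h0)])
  rcases le_or_gt x (2 : ℝ) with h1 | h1
  · exact piece_gen x (2 : ℝ) (108304247/156250000 : ℝ) (2 : ℝ) (6931471803/10000000000 : ℝ) hx (by norm_num)
      (by rw [show (2:ℝ) = 2^1 by norm_num, Real.log_pow]; push_cast; nlinarith [Real.log_two_lt_d9])
      (by norm_num) (by linarith [Real.log_two_gt_d9])
      (by linarith)
      (by nlinarith [mul_nonneg (sub_nonneg.2 (show (3/2 : ℝ) ≤ x by linarith)) (sub_nonneg.2 h1)])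
  rcases le_or_gt x (3 : ℝ) with h2 | h2
  · exact piece_gen x (2 : ℝ) (108304247/156250000 : ℝ) (2 : ℝ) (6931471803/10000000000 : ℝ) hx (by norm_num)
      (by rw [show (2:ℝ) = 2^1 by norm_num, Real.log_pow]; push_cast; nlinarith [Real.log_two_lt_d9])
      (by norm_num) (by linarith [Real.log_two_gt_d9])
      (by linarith)
      (by nlinarith [mul_nonneg (sub_nonneg.2 (show (2 : ℝ) ≤ x by linarith)) (sub_nonneg.2 h2)])
  rcases le_or_gt x (4 : ℝ) with h3 | h3
  · exact piece_gen x (3 : ℝ) (344443991/312500000 : ℝ) (2 : ℝ) (6931471803/10000000000 : ℝ) hx (by norm_num)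
      (by linarith [l3up])
      (by norm_num) (by linarith [Real.log_two_gt_d9])
      (by linarith)
      (by nlinarith [mul_nonneg (sub_nonneg.2 (show (3 : ℝ) ≤ x by linarith)) (sub_nonneg.2 h3)])
  rcases le_or_gt x (6 : ℝ) with h4 | h4
  · exact piece_gen x (4 : ℝ) (108304247/78125000 : ℝ) (2 : ℝ) (6931471803/10000000000 : ℝ) hx (by norm_num)
      (by rw [show (4:ℝ) = 2^2 by norm_num, Real.log_pow]; push_cast; nlinarith [Real.log_two_lt_d9])
      (by norm_num) (by linarith [Real.log_two_gt_d9])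
      (by linarith)
      (by nlinarith [mul_nonneg (sub_nonneg.2 (show (4 : ℝ) ≤ x by linarith)) (sub_nonneg.2 h4)])
  rcases le_or_gt x (9 : ℝ) with h5 | h5
  · exact piece_gen x (6 : ℝ) (112210497/62500000 : ℝ) (1 : ℝ) (0:ℝ) hx (by norm_num)
      (by rw [show (6:ℝ) = 3*2^1 by norm_num, Real.log_mul (by norm_num) (by norm_num), Real.log_pow]; push_cast; nlinarith [Real.log_two_lt_d9, l3up])
      (by norm_num) (by norm_num)
      (by linarith)
      (by nlinarith [mul_nonneg (sub_nonneg.2 (show (6 : ℝ) ≤ x by linarith)) (sub_nonneg.2 h5)])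
  rcases le_or_gt x (13 : ℝ) with h6 | h6
  · exact piece_gen x (8 : ℝ) (324912741/156250000 : ℝ) (1 : ℝ) (0:ℝ) hx (by norm_num)
      (by rw [show (8:ℝ) = 2^3 by norm_num, Real.log_pow]; push_cast; nlinarith [Real.log_two_lt_d9])
      (by norm_num) (by norm_num)
      (by linarith)
      (by nlinarith [mul_nonneg (sub_nonneg.2 (show (9 : ℝ) ≤ x by linarith)) (sub_nonneg.2 h6)])
  rcases le_or_gt x (19 : ℝ) with h7 | h7
  · exact piece_gen x (16 : ℝ) (108304247/39062500 : ℝ) (1 : ℝ) (0:ℝ) hx (by norm_num)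
      (by rw [show (16:ℝ) = 2^4 by norm_num, Real.log_pow]; push_cast; nlinarith [Real.log_two_lt_d9])
      (by norm_num) (by norm_num)
      (by linarith)
      (by nlinarith [mul_nonneg (sub_nonneg.2 (show (13 : ℝ) ≤ x by linarith)) (sub_nonneg.2 h7)])
  rcases le_or_gt x (28 : ℝ) with h8 | h8
  · exact piece_gen x (24 : ℝ) (994269473/312500000 : ℝ) (1 : ℝ) (0:ℝ) hx (by norm_num)
      (by rw [show (24:ℝ) = 3*2^3 by norm_num, Real.log_mul (by norm_num) (by norm_num), Real.log_pow]; push_cast; nlinarith [Real.log_two_lt_d9, l3up])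
      (by norm_num) (by norm_num)
      (by linarith)
      (by nlinarith [mul_nonneg (sub_nonneg.2 (show (19 : ℝ) ≤ x by linarith)) (sub_nonneg.2 h8)])
  rcases le_or_gt x (40 : ℝ) with h9 | h9
  · exact piece_gen x (32 : ℝ) (108304247/31250000 : ℝ) (1 : ℝ) (0:ℝ) hx (by norm_num)
      (by rw [show (32:ℝ) = 2^5 by norm_num, Real.log_pow]; push_cast; nlinarith [Real.log_two_lt_d9])
      (by norm_num) (by norm_num)
      (by linarith)
      (by nlinarith [mul_nonneg (sub_nonneg.2 (show (28 : ℝ) ≤ x by linarith)) (sub_nonneg.2 h9)])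
  rcases le_or_gt x (58 : ℝ) with h10 | h10
  · exact piece_gen x (48 : ℝ) (1210877967/312500000 : ℝ) (1 : ℝ) (0:ℝ) hx (by norm_num)
      (by rw [show (48:ℝ) = 3*2^4 by norm_num, Real.log_mul (by norm_num) (by norm_num), Real.log_pow]; push_cast; nlinarith [Real.log_two_lt_d9, l3up])
      (by norm_num) (by norm_num)
      (by linarith)
      (by nlinarith [mul_nonneg (sub_nonneg.2 (show (40 : ℝ) ≤ x by linarith)) (sub_nonneg.2 h10)])
  rcases le_or_gt x (84 : ℝ) with h11 | h11
  · exact piece_gen x (64 : ℝ) (324912741/78125000 : ℝ) (1 : ℝ) (0:ℝ) hx (by norm_num)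
      (by rw [show (64:ℝ) = 2^6 by norm_num, Real.log_pow]; push_cast; nlinarith [Real.log_two_lt_d9])
      (by norm_num) (by norm_num)
      (by linarith)
      (by nlinarith [mul_nonneg (sub_nonneg.2 (show (58 : ℝ) ≤ x by linarith)) (sub_nonneg.2 h11)])
  rcases le_or_gt x (120 : ℝ) with h12 | h12
  · exact piece_gen x (96 : ℝ) (1427486461/312500000 : ℝ) (1 : ℝ) (0:ℝ) hx (by norm_num)
      (by rw [show (96:ℝ) = 3*2^5 by norm_num, Real.log_mul (by norm_num) (by norm_num), Real.log_pow]; push_cast; nlinarith [Real.log_two_lt_d9, l3up])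
      (by norm_num) (by norm_num)
      (by linarith)
      (by nlinarith [mul_nonneg (sub_nonneg.2 (show (84 : ℝ) ≤ x by linarith)) (sub_nonneg.2 h12)])
  rcases le_or_gt x (170 : ℝ) with h13 | h13
  · exact piece_gen x (128 : ℝ) (758129729/156250000 : ℝ) (1 : ℝ) (0:ℝ) hx (by norm_num)
      (by rw [show (128:ℝ) = 2^7 by norm_num, Real.log_pow]; push_cast; nlinarith [Real.log_two_lt_d9])
      (by norm_num) (by norm_num)
      (by linarith)
      (by nlinarith [mul_nonneg (sub_nonneg.2 (show (120 : ℝ) ≤ x by linarith)) (sub_nonneg.2 h13)])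
  rcases le_or_gt x (240 : ℝ) with h14 | h14
  · exact piece_gen x (192 : ℝ) (328818991/62500000 : ℝ) (1 : ℝ) (0:ℝ) hx (by norm_num)
      (by rw [show (192:ℝ) = 3*2^6 by norm_num, Real.log_mul (by norm_num) (by norm_num), Real.log_pow]; push_cast; nlinarith [Real.log_two_lt_d9, l3up])
      (by norm_num) (by norm_num)
      (by linarith)
      (by nlinarith [mul_nonneg (sub_nonneg.2 (show (170 : ℝ) ≤ x by linarith)) (sub_nonneg.2 h14)])
  rcases le_or_gt x (330 : ℝ) with h15 | h15
  · exact piece_gen x (256 : ℝ) (108304247/19531250 : ℝ) (1 : ℝ) (0:ℝ) hx (by norm_num)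
      (by rw [show (256:ℝ) = 2^8 by norm_num, Real.log_pow]; push_cast; nlinarith [Real.log_two_lt_d9])
      (by norm_num) (by norm_num)
      (by linarith)
      (by nlinarith [mul_nonneg (sub_nonneg.2 (show (240 : ℝ) ≤ x by linarith)) (sub_nonneg.2 h15)])
  rcases le_or_gt x (460 : ℝ) with h16 | h16
  · exact piece_gen x (384 : ℝ) (1860703449/312500000 : ℝ) (1 : ℝ) (0:ℝ) hx (by norm_num)
      (by rw [show (384:ℝ) = 3*2^7 by norm_num, Real.log_mul (by norm_num) (by norm_num), Real.log_pow]; push_cast; nlinarith [Real.log_two_lt_d9, l3up])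
      (by norm_num) (by norm_num)
      (by linarith)
      (by nlinarith [mul_nonneg (sub_nonneg.2 (show (330 : ℝ) ≤ x by linarith)) (sub_nonneg.2 h16)])
  rcases le_or_gt x (650 : ℝ) with h17 | h17
  · exact piece_gen x (512 : ℝ) (974738223/156250000 : ℝ) (1 : ℝ) (0:ℝ) hx (by norm_num)
      (by rw [show (512:ℝ) = 2^9 by norm_num, Real.log_pow]; push_cast; nlinarith [Real.log_two_lt_d9])
      (by norm_num) (by norm_num)
      (by linarith)
      (by nlinarith [mul_nonneg (sub_nonneg.2 (show (460 : ℝ) ≤ x by linarith)) (sub_nonneg.2 h17)])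
  exact piece_gen x (2048 : ℝ) (1191346717/156250000 : ℝ) (1 : ℝ) (0:ℝ) hx (by norm_num)
      (by rw [show (2048:ℝ) = 2^11 by norm_num, Real.log_pow]; push_cast; nlinarith [Real.log_two_lt_d9])
      (by norm_num) (by norm_num)
      (by linarith)
      (by nlinarith [sq_nonneg (x - (650 : ℝ)), show (650 : ℝ) ≤ x by linarith])

lemma fact_le (j : ℕ) :
    (Nat.factorial (j+1) : ℝ) ≤ Real.exp 1 * Real.sqrt (j+1) * (((j:ℝ)+1) / Real.exp 1) ^ (j+1) := by
  have h := Stirling.stirlingSeq'_antitone (Nat.zero_le j)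
  simp only [Function.comp, Nat.succ_eq_add_one, Nat.zero_add] at h
  rw [Stirling.stirlingSeq_one] at h
  have hd : (0:ℝ) < Real.sqrt (2 * (j+1:ℕ)) * (((j+1:ℕ):ℝ) / Real.exp 1) ^ (j+1) := by
    have : (0:ℝ) < ((j+1:ℕ):ℝ) := by positivity
    positivity
  rw [Stirling.stirlingSeq, div_le_iff₀ hd] at h
  calc (Nat.factorial (j+1) : ℝ)
      ≤ Real.exp 1 / Real.sqrt 2 * (Real.sqrt (2 * (j+1:ℕ)) * (((j+1:ℕ):ℝ) / Real.exp 1) ^ (j+1)) := h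
    _ = Real.exp 1 * Real.sqrt (j+1) * (((j:ℝ)+1) / Real.exp 1) ^ (j+1) := by
        rw [show (2 * (j+1:ℕ) : ℝ) = 2 * ((j:ℝ)+1) by push_cast; ring,
          Real.sqrt_mul (by norm_num : (0:ℝ) ≤ 2)]
        have h2 : Real.sqrt 2 ≠ 0 := by positivity
        push_cast
        field_simp

lemma pi_e_bound : (85397323/85000000 : ℝ) * (17/2) ≤ π * Real.exp 1 := by
  nlinarith [Real.pi_gt_d6, Real.exp_one_gt_d9, Real.exp_one_lt_d9, Real.pi_lt_d2]

lemma even_case (m : ℕ) (hm : 1 ≤ m) :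
    (Nat.factorial (m+1) : ℝ) < (π * (2*(m:ℝ)+17)/17) ^ m := by
  set s : ℝ := (85397323/85000000 : ℝ) with hs
  set X : ℝ := (m : ℝ) with hX
  have hX1 : (1:ℝ) ≤ X := by rw [hX]; exact_mod_cast hm
  have hXpos : (0:ℝ) < X + 1 := by linarith
  set t : ℝ := s * (X + 17/2) / (X + 1) with ht
  have htpos : (0:ℝ) < t := by positivity
  have hmaster := master X hX1
  -- step1 : (X + 3/2) ^ (3/2 : ℝ) < t ^ m
  have step1 : (X + 3/2) ^ ((3:ℝ)/2) < t ^ m := by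
    rw [Real.rpow_def_of_pos (by linarith), ← Real.exp_log (show (0:ℝ) < t ^ m by positivity),
      Real.log_pow]
    apply Real.exp_lt_exp.2
    have : ((m:ℕ):ℝ) * Real.log t = X * Real.log t := by rw [hX]
    rw [mul_comm (Real.log (X + 3/2)) ((3:ℝ)/2), this]
    exact hmaster
  -- step2 : sqrt(X+1) * (X+1) ≤ (X+3/2)^(3/2)
  have step2 : Real.sqrt (X+1) * (X+1) ≤ (X + 3/2) ^ ((3:ℝ)/2) := by
    have e1 : Real.sqrt (X+1) * (X+1) = (X+1) ^ ((3:ℝ)/2) := by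
      rw [Real.sqrt_eq_rpow, show ((3:ℝ)/2) = 1/2 + 1 by norm_num,
        Real.rpow_add hXpos, Real.rpow_one]
    rw [e1]
    exact Real.rpow_le_rpow (by linarith) (by linarith) (by norm_num)
  have hfle := fact_le m
  have epos : (0:ℝ) < Real.exp 1 := Real.exp_pos 1
  have e2 : Real.exp 1 * Real.sqrt (X+1) * ((X+1) / Real.exp 1) ^ (m+1)
      = (X+1)^m * (Real.sqrt (X+1) * (X+1)) / (Real.exp 1)^m := by
    rw [div_pow]
    field_simp [pow_succ]
    ring
  have step3 : Real.exp 1 * Real.sqrt (X+1) * ((X+1) / Real.exp 1) ^ (m+1)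
      < (s * (X + 17/2) / Real.exp 1) ^ m := by
    rw [e2]
    have h1 : (X+1)^m * (Real.sqrt (X+1) * (X+1)) < (X+1)^m * t^m := by
      apply mul_lt_mul_of_pos_left (lt_of_le_of_lt step2 step1) (by positivity)
    have h2 : (X+1)^m * t^m = (s * (X + 17/2))^m := by
      rw [← mul_pow, ht]
      congr 1
      field_simp
    rw [div_pow]
    rw [div_lt_div_iff₀ (by positivity) (by positivity)]
    nlinarith [h1, h2, pow_pos epos m, mul_pos (pow_pos (show (0:ℝ) < X+1 by linarith) m) (pow_pos htpos m)]
  have step4 : (s * (X + 17/2) / Real.exp 1) ^ m ≤ (π * (2*X+17)/17) ^ m := by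
    apply pow_le_pow_left₀ (by positivity)
    rw [div_le_iff₀ epos]
    have := pi_e_bound
    nlinarith [Real.pi_gt_d6, epos, hX1, Real.exp_one_gt_d9]
  calc (Nat.factorial (m+1) : ℝ) ≤ _ := hfle
    _ < (s * (X + 17/2) / Real.exp 1) ^ m := step3
    _ ≤ (π * (2*X+17)/17) ^ m := step4

set_option maxHeartbeats 1000000 in
lemma odd_case (m : ℕ) (hm : 1 ≤ m) :
    (Nat.factorial (m+1) : ℝ) * (Nat.factorial (m+2) : ℝ) < (π * (2*(m:ℝ)+18)/17) ^ (2*m+1) := by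
  set s : ℝ := (85397323/85000000 : ℝ) with hs
  set Y : ℝ := (m : ℝ) with hY
  have hY1 : (1:ℝ) ≤ Y := by rw [hY]; exact_mod_cast hm
  set X : ℝ := Y + 1/2 with hX
  have hX1 : (1:ℝ) ≤ X := by rw [hX]; linarith
  have hXpos : (0:ℝ) < X + 1 := by linarith
  set t : ℝ := s * (X + 17/2) / (X + 1) with ht
  have htpos : (0:ℝ) < t := by positivity
  have hmaster := master X hX1
  have epos : (0:ℝ) < Real.exp 1 := Real.exp_pos 1
  -- step1 : (Y+2)^3 < t^(2m+1)
  have step1 : (Y + 2) ^ 3 < t ^ (2*m+1) := by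
    rw [← Real.exp_log (show (0:ℝ) < (Y+2)^3 by positivity),
      ← Real.exp_log (show (0:ℝ) < t ^ (2*m+1) by positivity), Real.log_pow, Real.log_pow]
    apply Real.exp_lt_exp.2
    have h1 : ((3:ℕ):ℝ) * Real.log (Y+2) = 2 * (3/2 * Real.log (X + 3/2)) := by
      rw [hX]; push_cast; ring_nf
    have h2 : ((2*m+1:ℕ):ℝ) * Real.log t = 2 * (X * Real.log t) := by
      rw [hX, hY]; push_cast; ring
    rw [h1, h2]
    linarith [hmaster]
  -- step2
  have hs12 : Real.sqrt (Y+1) * Real.sqrt (Y+2) ≤ Y + 3/2 := by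
    rw [← Real.sqrt_mul (by linarith)]
    have : Real.sqrt ((Y+1)*(Y+2)) ≤ Real.sqrt ((Y+3/2)^2) := by
      apply Real.sqrt_le_sqrt; nlinarith
    rwa [Real.sqrt_sq (by linarith)] at this
  have hp12 : (Y+1)^(m+1) * (Y+2)^(m+1) ≤ (Y+3/2)^(2*m+2) := by
    rw [← mul_pow, show 2*m+2 = 2*(m+1) by ring, pow_mul]
    apply pow_le_pow_left₀ (by nlinarith)
    nlinarith
  have step2 : Real.sqrt (Y+1) * Real.sqrt (Y+2) * ((Y+1)^(m+1) * (Y+2)^(m+2))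
      ≤ (Y+2)^3 * (Y+3/2)^(2*m+1) := by
    have e1 : (Y+1)^(m+1) * (Y+2)^(m+2) = ((Y+1)^(m+1) * (Y+2)^(m+1)) * (Y+2) := by ring
    calc Real.sqrt (Y+1) * Real.sqrt (Y+2) * ((Y+1)^(m+1) * (Y+2)^(m+2))
        ≤ (Y+3/2) * (((Y+1)^(m+1) * (Y+2)^(m+1)) * (Y+2)) := by
          rw [← e1]
          apply mul_le_mul hs12 le_rfl (by positivity) (by linarith)
      _ ≤ (Y+3/2) * ((Y+3/2)^(2*m+2) * (Y+2)) := by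
          apply mul_le_mul_of_nonneg_left _ (by linarith)
          apply mul_le_mul_of_nonneg_right hp12 (by linarith)
      _ = (Y+2) * (Y+3/2)^(2*m+3) := by ring
      _ ≤ (Y+2)^3 * (Y+3/2)^(2*m+1) := by
          have e2 : (Y+2) * (Y+3/2)^(2*m+3) = ((Y+3/2)^2 * (Y+2)) * (Y+3/2)^(2*m+1) := by ring
          have e3 : (Y+2)^3 = ((Y+2)^2 * (Y+2)) := by ring
          rw [e2, e3]
          apply mul_le_mul_of_nonneg_right _ (by positivity)
          apply mul_le_mul_of_nonneg_right _ (by linarith)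
          nlinarith
  -- combine with factorial bounds
  have hf1 := fact_le m
  have hf2 := fact_le (m+1)
  have hcast : ((m+1:ℕ):ℝ) = Y + 1 := by rw [hY]; push_cast; ring
  have hprod : (Nat.factorial (m+1) : ℝ) * (Nat.factorial (m+2) : ℝ)
      ≤ Real.sqrt (Y+1) * Real.sqrt (Y+2) * ((Y+1)^(m+1) * (Y+2)^(m+2)) / (Real.exp 1)^(2*m+1) := by
    have hb1 : (Nat.factorial (m+1) : ℝ) ≤ Real.exp 1 * Real.sqrt (Y+1) * ((Y+1) / Real.exp 1) ^ (m+1) := by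
      convert hf1 using 3 <;> rw [hY]
    have hb2 : (Nat.factorial (m+2) : ℝ) ≤ Real.exp 1 * Real.sqrt (Y+2) * ((Y+2) / Real.exp 1) ^ (m+2) := by
      have := fact_le (m+1)
      have c2 : ((m+1:ℕ):ℝ) + 1 = Y + 2 := by rw [hY]; push_cast; ring
      rw [show m+1+1 = m+2 by ring] at this
      rw [← c2]; exact_mod_cast this
    have hpos1 : (0:ℝ) ≤ Real.exp 1 * Real.sqrt (Y+1) * ((Y+1) / Real.exp 1) ^ (m+1) := by positivity
    calc (Nat.factorial (m+1) : ℝ) * (Nat.factorial (m+2) : ℝ)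
        ≤ (Real.exp 1 * Real.sqrt (Y+1) * ((Y+1) / Real.exp 1) ^ (m+1)) *
          (Real.exp 1 * Real.sqrt (Y+2) * ((Y+2) / Real.exp 1) ^ (m+2)) := by
          apply mul_le_mul hb1 hb2 (by positivity) hpos1
      _ = Real.sqrt (Y+1) * Real.sqrt (Y+2) * ((Y+1)^(m+1) * (Y+2)^(m+2)) / (Real.exp 1)^(2*m+1) := by
          rw [div_pow, div_pow]
          generalize Real.exp 1 = E at epos ⊢
          have hE0 : E ≠ 0 := ne_of_gt epos
          field_simp
          ring
  have step3 : Real.sqrt (Y+1) * Real.sqrt (Y+2) * ((Y+1)^(m+1) * (Y+2)^(m+2)) / (Real.exp 1)^(2*m+1)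
      < (s * (X + 17/2) / Real.exp 1) ^ (2*m+1) := by
    rw [div_pow, div_lt_div_iff₀ (by positivity) (by positivity)]
    have h4 : (s * (X + 17/2))^(2*m+1) = t^(2*m+1) * (X+1)^(2*m+1) := by
      rw [← mul_pow, ht]
      congr 1
      rw [div_mul_cancel₀ _ (ne_of_gt hXpos)]
    have h5 : Real.sqrt (Y+1) * Real.sqrt (Y+2) * ((Y+1)^(m+1) * (Y+2)^(m+2))
        < t^(2*m+1) * (X+1)^(2*m+1) := by
      have hXY : X + 1 = Y + 3/2 := by rw [hX]; ring
      calc Real.sqrt (Y+1) * Real.sqrt (Y+2) * ((Y+1)^(m+1) * (Y+2)^(m+2))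
          ≤ (Y+2)^3 * (Y+3/2)^(2*m+1) := step2
        _ < t^(2*m+1) * (Y+3/2)^(2*m+1) := by
            apply mul_lt_mul_of_pos_right step1 (by positivity)
        _ = t^(2*m+1) * (X+1)^(2*m+1) := by rw [hXY]
    calc Real.sqrt (Y+1) * Real.sqrt (Y+2) * ((Y+1)^(m+1) * (Y+2)^(m+2)) * (Real.exp 1)^(2*m+1)
        < (t^(2*m+1) * (X+1)^(2*m+1)) * (Real.exp 1)^(2*m+1) := by
          apply mul_lt_mul_of_pos_right h5 (by positivity)
      _ = (s * (X + 17/2))^(2*m+1) * (Real.exp 1)^(2*m+1) := by rw [h4]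
  have step4 : (s * (X + 17/2) / Real.exp 1) ^ (2*m+1) ≤ (π * (2*Y+18)/17) ^ (2*m+1) := by
    apply pow_le_pow_left₀ (by positivity)
    rw [div_le_div_iff₀ epos (by norm_num : (0:ℝ) < 17)]
    -- s * (X + 17/2) * 17 ≤ π * (2Y+18) * e ; X + 17/2 = Y + 9
    have hXe : X + 17/2 = Y + 9 := by rw [hX]; ring
    rw [hXe, hs]
    nlinarith [mul_le_mul_of_nonneg_right pi_e_bound (show (0:ℝ) ≤ Y+9 by linarith)]
  calc (Nat.factorial (m+1) : ℝ) * (Nat.factorial (m+2) : ℝ)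
      ≤ _ := hprod
    _ < (s * (X + 17/2) / Real.exp 1) ^ (2*m+1) := step3
    _ ≤ (π * (2*Y+18)/17) ^ (2*m+1) := step4

theorem blichfeldt_bound_lt_linear (n : ℕ) (hn : 1 ≤ n) :
    (2 / π) * (Real.Gamma (2 + (n : ℝ) / 2)) ^ (2 / (n : ℝ)) < (n : ℝ) / 8.5 + 2 := by
  have hpi := Real.pi_pos
  have hn0 : (0:ℝ) < n := by exact_mod_cast hn
  have hGpos : 0 < Real.Gamma (2 + (n:ℝ)/2) := Real.Gamma_pos_of_pos (by positivity)
  have hbpos : (0:ℝ) < π/2 * ((n:ℝ)/8.5 + 2) := by positivity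
  suffices hW : Real.Gamma (2 + (n:ℝ)/2) < (π/2 * ((n:ℝ)/8.5 + 2)) ^ ((n:ℝ)/2) by
    have h1 : (Real.Gamma (2 + (n:ℝ)/2)) ^ (2/(n:ℝ))
        < ((π/2 * ((n:ℝ)/8.5 + 2)) ^ ((n:ℝ)/2)) ^ (2/(n:ℝ)) :=
      Real.rpow_lt_rpow (le_of_lt hGpos) hW (by positivity)
    rw [← Real.rpow_mul (le_of_lt hbpos),
      show (n:ℝ)/2 * (2/(n:ℝ)) = 1 by field_simp, Real.rpow_one] at h1
    calc (2/π) * (Real.Gamma (2 + (n:ℝ)/2)) ^ (2/(n:ℝ))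
        < (2/π) * (π/2 * ((n:ℝ)/8.5 + 2)) := by
          apply mul_lt_mul_of_pos_left h1 (by positivity)
      _ = (n:ℝ)/8.5 + 2 := by field_simp
  rcases Nat.even_or_odd n with ⟨m, hm⟩ | ⟨m, hm⟩
  · -- even : n = m + m
    have hm1 : 1 ≤ m := by omega
    have hm1' : (1:ℝ) ≤ (m:ℝ) := by exact_mod_cast hm1
    subst hm
    have harg : 2 + ((m+m:ℕ):ℝ)/2 = ((m+1:ℕ):ℝ) + 1 := by push_cast; ring
    have hexp : ((m+m:ℕ):ℝ)/2 = ((m:ℕ):ℝ) := by push_cast; ring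
    rw [harg, Real.Gamma_nat_eq_factorial, hexp, Real.rpow_natCast]
    have hbase : π/2 * (((m+m:ℕ):ℝ)/8.5 + 2) = π * (2*(m:ℝ)+17)/17 := by
      push_cast
      rw [show (8.5:ℝ) = 17/2 by norm_num]
      field_simp
      ring
    rw [hbase]
    exact even_case m hm1
  · -- odd : n = 2*m+1
    rcases Nat.eq_zero_or_pos m with rfl | hm1
    · -- n = 1
      have h12 : Real.Gamma (1/2) = Real.sqrt π := Real.Gamma_one_half_eq
      have h32 : Real.Gamma (3/2) = 1/2 * Real.sqrt π := by
        rw [show (3/2 : ℝ) = 1/2 + 1 by norm_num, Real.Gamma_add_one (by norm_num), h12]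
      have h52 : Real.Gamma (2 + 1/2) = 3/4 * Real.sqrt π := by
        rw [show (2 + 1/2 : ℝ) = 3/2 + 1 by norm_num, Real.Gamma_add_one (by norm_num), h32]
        ring
      subst hm
      have hcast : ((2*0+1:ℕ):ℝ) = 1 := by norm_num
      rw [hcast, show (2:ℝ) + 1/2 = 2 + 1/2 from rfl, h52]
      have hb : (0:ℝ) < π/2 * ((1:ℝ)/8.5 + 2) := by positivity
      apply lt_of_pow_lt_pow_left₀ 2 (le_of_lt (Real.rpow_pos_of_pos hb _))
      have hW2 : ((π/2 * ((1:ℝ)/8.5 + 2)) ^ ((1:ℝ)/2))^2 = π/2 * ((1:ℝ)/8.5 + 2) := by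
        rw [← Real.rpow_natCast _ 2, ← Real.rpow_mul (le_of_lt hb)]
        norm_num
      rw [hW2]
      have : (3/4 * Real.sqrt π)^2 = 9/16 * π := by
        rw [mul_pow, Real.sq_sqrt (le_of_lt hpi)]; ring
      rw [this]
      nlinarith [hpi]
    · -- m ≥ 1
      have hm1' : (1:ℝ) ≤ (m:ℝ) := by exact_mod_cast hm1
      subst hm
      set Y : ℝ := (m:ℝ) with hY
      have hb : (0:ℝ) < π * (2*Y+18)/17 := by positivity
      have hbase : π/2 * (((2*m+1:ℕ):ℝ)/8.5 + 2) = π * (2*Y+18)/17 := by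
        push_cast
        rw [show (8.5:ℝ) = 17/2 by norm_num]
        field_simp
        ring
      have harg : 2 + ((2*m+1:ℕ):ℝ)/2 = Y + 5/2 := by push_cast; ring
      rw [harg, hbase]
      -- convexity: Gamma(Y+5/2)^2 ≤ (m+1)! * (m+2)!
      have hconv : Real.Gamma (Y + 5/2)^2 ≤ (Nat.factorial (m+1) : ℝ) * (Nat.factorial (m+2) : ℝ) := by
        have hmem1 : (Y + 2 : ℝ) ∈ Set.Ioi (0:ℝ) := by simp; linarith
        have hmem2 : (Y + 3 : ℝ) ∈ Set.Ioi (0:ℝ) := by simp; linarith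
        have hc := Real.convexOn_log_Gamma.2 hmem1 hmem2
          (by norm_num : (0:ℝ) ≤ 1/2) (by norm_num : (0:ℝ) ≤ 1/2) (by norm_num)
        simp only [smul_eq_mul, Function.comp_apply] at hc
        have harg2 : (1/2 : ℝ) * (Y+2) + (1/2 : ℝ) * (Y+3) = Y + 5/2 := by ring
        rw [harg2] at hc
        have hg1 : (0:ℝ) < Real.Gamma (Y+2) := Real.Gamma_pos_of_pos (by linarith)
        have hg2 : (0:ℝ) < Real.Gamma (Y+3) := Real.Gamma_pos_of_pos (by linarith)
        have hg0 : (0:ℝ) < Real.Gamma (Y+5/2) := Real.Gamma_pos_of_pos (by linarith)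
        have h2 : Real.Gamma (Y+5/2)^2 ≤ Real.Gamma (Y+2) * Real.Gamma (Y+3) := by
          have := Real.exp_le_exp.2 (by linarith [hc] :
            2 * Real.log (Real.Gamma (Y+5/2)) ≤ Real.log (Real.Gamma (Y+2)) + Real.log (Real.Gamma (Y+3)))
          rw [Real.exp_add, Real.exp_log hg1, Real.exp_log hg2] at this
          calc Real.Gamma (Y+5/2)^2 = Real.exp (2 * Real.log (Real.Gamma (Y+5/2))) := by
                rw [show (2:ℝ) * Real.log (Real.Gamma (Y+5/2))
                    = Real.log (Real.Gamma (Y+5/2)) + Real.log (Real.Gamma (Y+5/2)) by ring,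
                  Real.exp_add, Real.exp_log hg0]; ring
            _ ≤ _ := this
        have hG2 : Real.Gamma (Y+2) = (Nat.factorial (m+1) : ℝ) := by
          rw [show Y + 2 = ((m+1:ℕ):ℝ) + 1 by rw [hY]; push_cast; ring,
            Real.Gamma_nat_eq_factorial]
        have hG3 : Real.Gamma (Y+3) = (Nat.factorial (m+2) : ℝ) := by
          rw [show Y + 3 = ((m+2:ℕ):ℝ) + 1 by rw [hY]; push_cast; ring,
            Real.Gamma_nat_eq_factorial]
        rwa [hG2, hG3] at h2
      have hW2 : ((π * (2*Y+18)/17) ^ (((2*m+1:ℕ):ℝ)/2))^2 = (π * (2*Y+18)/17)^(2*m+1) := by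
        rw [← Real.rpow_natCast _ 2, ← Real.rpow_mul (le_of_lt hb),
          show ((2*m+1:ℕ):ℝ)/2 * ((2:ℕ):ℝ) = ((2*m+1:ℕ):ℝ) by push_cast; ring,
          Real.rpow_natCast]
      apply lt_of_pow_lt_pow_left₀ 2 (le_of_lt (Real.rpow_pos_of_pos hb _))
      rw [hW2]
      calc Real.Gamma (Y + 5/2)^2 ≤ _ := hconv
        _ < (π * (2*Y+18)/17)^(2*m+1) := odd_case m hm1
end

section
/- For all real numbers a, b, c with 0 < a < b and c > 0, the integral ∫_a^b (ln(1 + c/t)/t) dt is at most (9/8)·ln( b(3a + 2c) / (a(3b + 2c)) ) + c(b − a)/(4ab). -/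
open Real

lemma pade_log {x : ℝ} (hx : 0 ≤ x) : Real.log (1 + x) ≤ x * (x + 6) / (2 * (2 * x + 3)) := by
  set f : ℝ → ℝ := fun y => y * (y + 6) / (2 * (2 * y + 3)) - Real.log (1 + y) with hf
  have hder : ∀ y : ℝ, 0 ≤ y → HasDerivAt f (4 * y ^ 3 / ((2 * (2 * y + 3)) ^ 2 * (1 + y))) y := by
    intro y hy
    have h1 : (2 * (2 * y + 3)) ≠ 0 := by nlinarith
    have h2 : (1 : ℝ) + y ≠ 0 := by nlinarith
    have hq : HasDerivAt (fun y : ℝ => y * (y + 6) / (2 * (2 * y + 3)))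
        (((2 * y + 6) * (2 * (2 * y + 3)) - y * (y + 6) * 4) / (2 * (2 * y + 3)) ^ 2) y := by
      have hn : HasDerivAt (fun y : ℝ => y * (y + 6)) (2 * y + 6) y := by
        have := (hasDerivAt_id y).mul ((hasDerivAt_id y).add_const 6)
        have h := this; simp at h
        exact h.congr_deriv (by ring)
      have hd : HasDerivAt (fun y : ℝ => 2 * (2 * y + 3)) 4 y := by
        have := (((hasDerivAt_id y).const_mul 2).add_const 3).const_mul 2
        exact this.congr_deriv (by ring)
      exact hn.div hd h1
    have hl : HasDerivAt (fun y : ℝ => Real.log (1 + y)) (1 / (1 + y)) y := by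
      have := ((hasDerivAt_id y).const_add 1).log h2
      simpa using this
    refine (hq.sub hl).congr_deriv ?_
    field_simp
    ring
  have hmono : MonotoneOn f (Set.Ici 0) := by
    apply monotoneOn_of_deriv_nonneg (convex_Ici 0)
    · intro y hy
      exact (hder y hy).continuousAt.continuousWithinAt
    · intro y hy
      rw [interior_Ici] at hy
      exact (hder y hy.le).differentiableAt.differentiableWithinAt
    · intro y hy
      rw [interior_Ici] at hy
      have hy' : 0 < y := hy
      rw [(hder y hy.le).deriv]
      positivity
  have h0 : f 0 ≤ f x := hmono Set.self_mem_Ici hx hx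
  have hf0 : f 0 = 0 := by simp [hf]
  rw [hf0] at h0
  simp only [hf] at h0
  linarith

theorem integral_log_bound (a b c : ℝ) (ha : 0 < a) (hab : a < b) (hc : 0 < c) :
    ∫ t in a..b, Real.log (1 + c / t) / t ≤
      (9 / 8) * Real.log (b * (3 * a + 2 * c) / (a * (3 * b + 2 * c))) + c * (b - a) / (4 * a * b) := by
  have hb : 0 < b := ha.trans hab
  set g : ℝ → ℝ := fun t => 9 * c / (4 * t * (3 * t + 2 * c)) + c / (4 * t ^ 2) with hg
  set F : ℝ → ℝ := fun t => 9 / 8 * (Real.log t - Real.log (3 * t + 2 * c)) - c / 4 * t⁻¹ with hF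
  have huIcc : Set.uIcc a b = Set.Icc a b := Set.uIcc_of_le hab.le
  have hpos : ∀ t ∈ Set.Icc a b, 0 < t := fun t ht => ha.trans_le ht.1
  -- continuity
  have hcont_lhs : ContinuousOn (fun t => Real.log (1 + c / t) / t) (Set.Icc a b) := by
    apply ContinuousOn.div _ continuousOn_id (fun t ht => (hpos t ht).ne')
    apply ContinuousOn.log
    · exact continuousOn_const.add (continuousOn_const.div continuousOn_id
        (fun t ht => (hpos t ht).ne'))
    · intro t ht
      have h1 := hpos t ht
      positivity
  have hcont_g : ContinuousOn g (Set.Icc a b) := by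
    apply ContinuousOn.add
    · apply continuousOn_const.div
      · exact (continuousOn_const.mul continuousOn_id).mul
          ((continuousOn_const.mul continuousOn_id).add continuousOn_const)
      · intro t ht
        have h1 := hpos t ht
        positivity
    · apply continuousOn_const.div
        (continuousOn_const.mul ((continuousOn_id (s := Set.Icc a b)).pow 2))
      intro t ht
      have h1 := hpos t ht
      show (4:ℝ) * t ^ 2 ≠ 0
      positivity
  have hint_lhs : IntervalIntegrable (fun t => Real.log (1 + c / t) / t) MeasureTheory.volume a b := by
    apply ContinuousOn.intervalIntegrable
    rwa [huIcc]
  have hint_g : IntervalIntegrable g MeasureTheory.volume a b := by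
    apply ContinuousOn.intervalIntegrable
    rwa [huIcc]
  -- pointwise bound
  have hle : ∀ t ∈ Set.Icc a b, Real.log (1 + c / t) / t ≤ g t := by
    intro t ht
    have htp := hpos t ht
    have hx : (0:ℝ) ≤ c / t := by positivity
    have hpl := pade_log hx
    calc Real.log (1 + c / t) / t ≤ (c / t * (c / t + 6) / (2 * (2 * (c / t) + 3))) / t := by
          gcongr
      _ = g t := by
          rw [hg]
          have h1 : (2 * (2 * (c / t) + 3)) ≠ 0 := by positivity
          field_simp
          ring
  have step1 := intervalIntegral.integral_mono_on hab.le hint_lhs hint_g hle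
  -- FTC
  have hderF : ∀ t ∈ Set.uIcc a b, HasDerivAt F (g t) t := by
    intro t ht
    rw [huIcc] at ht
    have htp := hpos t ht
    have h3 : (0:ℝ) < 3 * t + 2 * c := by positivity
    have hlog1 : HasDerivAt (fun t : ℝ => Real.log t) t⁻¹ t := Real.hasDerivAt_log htp.ne'
    have hlog2 : HasDerivAt (fun t : ℝ => Real.log (3 * t + 2 * c)) (3 / (3 * t + 2 * c)) t := by
      have hi : HasDerivAt (fun t : ℝ => 3 * t + 2 * c) 3 t := by
        have := ((hasDerivAt_id t).const_mul 3).add_const (2 * c)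
        simpa using this
      have := hi.log h3.ne'
      simpa using this
    have hinv : HasDerivAt (fun t : ℝ => c / 4 * t⁻¹) (c / 4 * (-(t ^ 2)⁻¹)) t :=
      (hasDerivAt_inv htp.ne').const_mul (c / 4)
    have := (((hlog1.sub hlog2).const_mul (9 / 8 : ℝ)).sub hinv)
    refine this.congr_deriv ?_
    rw [hg]
    field_simp
    ring
  have step2 : ∫ t in a..b, g t = F b - F a :=
    intervalIntegral.integral_eq_sub_of_hasDerivAt hderF hint_g
  -- evaluate F b - F a
  have h3a : (0:ℝ) < 3 * a + 2 * c := by positivity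
  have h3b : (0:ℝ) < 3 * b + 2 * c := by positivity
  have heval : F b - F a =
      (9 / 8) * Real.log (b * (3 * a + 2 * c) / (a * (3 * b + 2 * c))) + c * (b - a) / (4 * a * b) := by
    rw [hF]
    have hnum : (0:ℝ) < b * (3 * a + 2 * c) := by positivity
    rw [Real.log_div (by positivity) (by positivity), Real.log_mul hb.ne' h3a.ne',
      Real.log_mul ha.ne' h3b.ne']
    have hc4 : c / 4 * a⁻¹ - c / 4 * b⁻¹ = c * (b - a) / (4 * a * b) := by
      field_simp
    ring_nf
    ring_nf at hc4
    linarith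
  rw [step2, heval] at step1
  exact step1
end
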